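/- If g is continuous on ℝ⁺ and E[g²(X₁Y₁)] < ∞, then E[g²(X₁Y₁/(X̄Ȳ))] → E[g²(X₁Y₁)] = ∫₀^∞ ∫₀^∞ g²(xy) e^{−x} e^{−y} dy dx as n → ∞. -/

import Mathlib

open MeasureTheory ProbabilityTheory Filter Real Topology

namespace LeCamAux

open Set

noncomputable def qr (x : ℝ) : ℝ := if 0 < x then Real.exp (-x) else 0

lemma qr_nonneg (x : ℝ) : 0 ≤ qr x := by
  unfold qr; split_ifs <;> positivity

lemma qr_le_one (x : ℝ) : qr x ≤ 1 := by
  unfold qr; split_ifs with h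
  · exact Real.exp_le_one_iff.2 (by linarith)
  · exact zero_le_one

lemma measurable_qr : Measurable qr := by
  unfold qr
  exact Measurable.ite measurableSet_Ioi (by fun_prop) measurable_const

lemma expMeasure_eq :
    expMeasure 1 = volume.withDensity (fun x => ENNReal.ofReal (qr x)) := by
  have h1 : expMeasure 1 = volume.withDensity (exponentialPDF 1) := rfl
  rw [h1]
  refine withDensity_congr_ae ?_
  have h0 : ∀ᵐ (x:ℝ) ∂(volume : Measure ℝ), x ≠ 0 := by
    refine ae_iff.2 ?_
    simp only [ne_eq, not_not, Set.setOf_eq_eq_singleton]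
    exact measure_singleton 0
  filter_upwards [h0] with x hx
  rw [exponentialPDF_eq]
  unfold qr
  rcases lt_trichotomy x 0 with h | h | h
  · rw [if_neg (not_le.2 h), if_neg (by linarith)]
  · exact absurd h hx
  · rw [if_pos h.le, if_pos h]; norm_num

lemma integral_expMeasure (f : ℝ → ℝ) :
    ∫ x, f x ∂(expMeasure 1) = ∫ x in Ioi (0:ℝ), f x * Real.exp (-x) := by
  rw [expMeasure_eq]
  have hd : (fun x => ENNReal.ofReal (qr x))
      = fun x => ((Real.toNNReal (qr x) : NNReal) : ENNReal) := rfl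
  rw [hd, integral_withDensity_eq_integral_smul
    (f := fun x => (qr x).toNNReal) (measurable_qr.real_toNNReal) f,
    ← integral_indicator measurableSet_Ioi]
  congr 1
  funext x
  simp only [NNReal.smul_def, Real.coe_toNNReal _ (qr_nonneg x), indicator, mem_Ioi]
  unfold qr
  split_ifs with h
  · simp [smul_eq_mul, mul_comm]
  · simp

lemma expMeasure_Iic (t : ℝ) :
    expMeasure 1 (Iic t) = ENNReal.ofReal (if 0 ≤ t then 1 - Real.exp (-t) else 0) := by
  have h1 : expMeasure 1 = volume.withDensity (exponentialPDF 1) := rfl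
  rw [h1, withDensity_apply _ measurableSet_Iic, lintegral_exponentialPDF_eq_antiDeriv one_pos t]
  norm_num

lemma laplace_expMeasure {c : ℝ} (hc : 0 ≤ c) :
    ∫ x, Real.exp (-(c * x)) ∂(expMeasure 1) = (1 + c)⁻¹ := by
  rw [integral_expMeasure]
  have : ∀ x : ℝ, Real.exp (-(c * x)) * Real.exp (-x) = Real.exp (-((c+1) * x)) := by
    intro x; rw [← Real.exp_add]; ring_nf
  simp_rw [this]
  have hpos : (0:ℝ) < c + 1 := by linarith
  have := integral_comp_mul_left_Ioi (fun x => Real.exp (-x)) 0 hpos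
  simp only [mul_zero, smul_eq_mul] at this
  calc ∫ x in Ioi (0:ℝ), Real.exp (-((c+1) * x))
      = (c+1)⁻¹ * ∫ x in Ioi (0:ℝ), Real.exp (-x) := this
    _ = (1 + c)⁻¹ := by rw [integral_exp_neg_Ioi_zero]; ring_nf


noncomputable def phin (n : ℕ) (s : ℝ) : ℝ := (((n:ℝ)-1)/n) * (1 - s/n)^(n-2)

noncomputable def pdens (n : ℕ) (t : ℝ) : ℝ := Set.indicator (Ioc (0:ℝ) n) (phin n) t

lemma continuous_phin (n : ℕ) : Continuous (phin n) := by
  unfold phin; fun_prop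

lemma measurable_pdens (n : ℕ) : Measurable (pdens n) :=
  ((continuous_phin n).measurable).indicator measurableSet_Ioc

lemma phin_nonneg {n : ℕ} {t : ℝ} (ht : t ∈ Ioc (0:ℝ) n) : 0 ≤ phin n t := by
  obtain ⟨h0, h1⟩ := ht
  have hn1 : (1:ℝ) ≤ n := by
    have : (0:ℝ) < n := lt_of_lt_of_le h0 h1
    exact_mod_cast Nat.one_le_iff_ne_zero.2 (by exact_mod_cast this.ne')
  have hn0 : (0:ℝ) < n := by linarith
  apply mul_nonneg (div_nonneg (by linarith) hn0.le)
  apply pow_nonneg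
  have : t/(n:ℝ) ≤ 1 := (div_le_one hn0).2 h1
  linarith

lemma pdens_nonneg (n : ℕ) (t : ℝ) : 0 ≤ pdens n t := by
  unfold pdens
  rw [Set.indicator_apply]
  split_ifs with h
  · exact phin_nonneg h
  · exact le_refl 0

lemma pdens_le_one (n : ℕ) (t : ℝ) : pdens n t ≤ 1 := by
  unfold pdens
  rw [Set.indicator_apply]
  split_ifs with h
  · obtain ⟨h0, h1⟩ := h
    have hn0 : (0:ℝ) < n := lt_of_lt_of_le h0 h1
    have htn : t/(n:ℝ) ≤ 1 := (div_le_one hn0).2 h1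
    have h2 : (1 - t/(n:ℝ))^(n-2) ≤ 1 :=
      pow_le_one₀ (by linarith [(div_nonneg h0.le hn0.le : 0 ≤ t/(n:ℝ))]) (by
        have : 0 ≤ t/(n:ℝ) := div_nonneg h0.le hn0.le
        linarith)
    have h3 : ((n:ℝ)-1)/n ≤ 1 := (div_le_one hn0).2 (by linarith)
    calc ((n:ℝ)-1)/n * (1 - t/n)^(n-2) ≤ 1 * 1 := by
          apply mul_le_mul h3 h2 (pow_nonneg (by
            have : t/(n:ℝ) ≤ 1 := htn
            linarith) _) zero_le_one
      _ = 1 := by ring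
  · exact zero_le_one

lemma qr_nonneg' (x : ℝ) : 0 ≤ qr x := by unfold qr; split_ifs <;> positivity

lemma pdens_le {n : ℕ} (hn : 2 ≤ n) (t : ℝ) : pdens n t ≤ Real.exp 2 * qr t := by
  unfold pdens
  rw [Set.indicator_apply]
  split_ifs with h
  · obtain ⟨h0, h1⟩ := h
    have hn0 : (0:ℝ) < n := by positivity
    have hqr : qr t = Real.exp (-t) := if_pos h0
    rw [hqr, ← Real.exp_add]
    have hb : (1 - t/(n:ℝ)) ≤ Real.exp (-(t/n)) := by
      have := Real.add_one_le_exp (-(t/(n:ℝ)))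
      linarith
    have hb0 : (0:ℝ) ≤ 1 - t/n := by
      have : t/(n:ℝ) ≤ 1 := (div_le_one hn0).2 h1
      linarith
    have h2 : (1 - t/(n:ℝ))^(n-2) ≤ Real.exp (-(t/n))^(n-2) :=
      pow_le_pow_left₀ hb0 hb _
    have h3 : Real.exp (-(t/(n:ℝ)))^(n-2) = Real.exp (((n:ℕ)-2 : ℕ) * (-(t/n))) := by
      rw [← Real.exp_nat_mul]
    have h4 : (((n:ℕ)-2 : ℕ) : ℝ) * (-(t/n)) ≤ 2 + -t := by
      have hc : (((n:ℕ)-2 : ℕ) : ℝ) = (n:ℝ) - 2 := by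
        push_cast [Nat.cast_sub hn]; ring
      rw [hc]
      have h5 : ((n:ℝ) - 2) * (-(t/n)) = -t + 2 * (t/n) := by field_simp; ring
      have h6 : t / n ≤ 1 := (div_le_one hn0).2 h1
      have h7 : 0 ≤ t / n := div_nonneg h0.le hn0.le
      nlinarith
    have h8 : (1 - t/(n:ℝ))^(n-2) ≤ Real.exp (2 + -t) := by
      calc (1 - t/(n:ℝ))^(n-2) ≤ Real.exp (-(t/n))^(n-2) := h2
        _ = Real.exp (((n:ℕ)-2 : ℕ) * (-(t/n))) := h3
        _ ≤ Real.exp (2 + -t) := Real.exp_le_exp.2 h4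
    have h9 : ((n:ℝ)-1)/n ≤ 1 := (div_le_one hn0).2 (by linarith)
    calc ((n:ℝ)-1)/n * (1 - t/n)^(n-2) ≤ 1 * Real.exp (2 + -t) := by
          apply mul_le_mul h9 h8 (pow_nonneg hb0 _) zero_le_one
      _ = Real.exp (2 + -t) := one_mul _
  · exact mul_nonneg (Real.exp_pos 2).le (qr_nonneg' t)

lemma pdens_tendsto (t : ℝ) : Tendsto (fun n => pdens n t) atTop (𝓝 (qr t)) := by
  rcases le_or_gt t 0 with ht | ht
  · have h1 : ∀ n : ℕ, pdens n t = 0 := by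
      intro n
      apply Set.indicator_of_notMem
      intro hmem
      exact absurd hmem.1 (not_lt.2 ht)
    have h2 : qr t = 0 := if_neg (not_lt.2 ht)
    simp only [h1, h2, tendsto_const_nhds]
  · have h2 : qr t = Real.exp (-t) := if_pos ht
    rw [h2]
    have hL : Tendsto (fun n : ℕ => (1 - 1/(n:ℝ)) * ((1 + (-t)/n)^n / (1 - t/n)^2))
        atTop (𝓝 (1 * (Real.exp (-t) / 1))) := by
      apply Tendsto.mul
      · have := tendsto_one_div_atTop_nhds_zero_nat (𝕜 := ℝ)
        have h3 : Tendsto (fun n : ℕ => 1 - 1/(n:ℝ)) atTop (𝓝 (1 - 0)) :=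
          tendsto_const_nhds.sub this
        simpa using h3
      · apply Tendsto.div (Real.tendsto_one_add_div_pow_exp (-t))
        · have h4 : Tendsto (fun n : ℕ => 1 - t/(n:ℝ)) atTop (𝓝 (1 - 0)) :=
            tendsto_const_nhds.sub (tendsto_const_div_atTop_nhds_zero_nat t)
          have h5 : Tendsto (fun n : ℕ => (1 - t/(n:ℝ))^2) atTop (𝓝 ((1 - 0)^2)) := h4.pow 2
          simpa using h5
        · norm_num
    rw [show Real.exp (-t) = 1 * (Real.exp (-t) / 1) by ring] 
    apply Tendsto.congr' _ hL
    rw [Filter.eventuallyEq_iff_exists_mem]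
    refine ⟨{n : ℕ | max 2 (⌈t⌉₊ + 1) ≤ n}, Filter.mem_atTop _, ?_⟩
    intro n hn
    simp only [Set.mem_setOf_eq, max_le_iff] at hn
    obtain ⟨hn2, hnt⟩ := hn
    have htn : t < (n:ℝ) := by
      calc t ≤ (⌈t⌉₊ : ℝ) := Nat.le_ceil t
        _ < (⌈t⌉₊ : ℝ) + 1 := by linarith
        _ ≤ (n:ℝ) := by exact_mod_cast hnt
    have hn0 : (0:ℝ) < n := by positivity
    have hmem : t ∈ Ioc (0:ℝ) n := ⟨ht, htn.le⟩
    have hbpos : (0:ℝ) < 1 - t/n := by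
      have : t/(n:ℝ) < 1 := (div_lt_one hn0).2 htn
      linarith
    have key : (1 + (-t)/(n:ℝ))^n / (1 - t/n)^2 = (1 - t/n)^(n-2) := by
      have h6 : (1 + (-t)/(n:ℝ)) = 1 - t/n := by ring
      have h8 : (1 - t/(n:ℝ))^n = (1 - t/n)^(n-2) * (1 - t/n)^2 := by
        rw [← pow_add]
        congr 1
        omega
      rw [h6, h8]
      rw [mul_div_assoc, div_self (by positivity : ((1:ℝ) - t/n)^2 ≠ 0), mul_one]
    have h7 : (1:ℝ) - 1/n = ((n:ℝ)-1)/n := by field_simp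
    show (1 - 1/(n:ℝ)) * ((1 + (-t)/n)^n / (1 - t/n)^2) = pdens n t
    unfold pdens
    rw [Set.indicator_of_mem hmem, key, h7]
    rfl

lemma integrable_pdens (n : ℕ) : Integrable (pdens n) (volume : Measure ℝ) := by
  unfold pdens
  apply (IntegrableOn.integrable_indicator _ measurableSet_Ioc)
  exact (continuous_phin n).integrableOn_Ioc

lemma lintegral_pdens_Iic {n : ℕ} (hn : 2 ≤ n) (t : ℝ) :
    ∫⁻ s in Iic t, ENNReal.ofReal (pdens n s)
      = ENNReal.ofReal (if 0 < t then 1 - (1 - min (n:ℝ) t/n)^(n-1) else 0) := by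
  have hreal : ∫ s in Iic t, pdens n s
      = (if 0 < t then 1 - (1 - min (n:ℝ) t/n)^(n-1) else 0) := by
    unfold pdens
    rw [setIntegral_indicator measurableSet_Ioc]
    have hset : Iic t ∩ Ioc (0:ℝ) n = Ioc 0 (min (n:ℝ) t) := by
      rw [Set.inter_comm, Set.Ioc_inter_Iic]
    rw [hset]
    split_ifs with ht
    · have hn0 : (0:ℝ) < n := by positivity
      have hu : (0:ℝ) < min (n:ℝ) t := lt_min hn0 ht
      rw [← intervalIntegral.integral_of_le hu.le]
      have hderiv : ∀ s ∈ Set.uIcc (0:ℝ) (min (n:ℝ) t),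
          HasDerivAt (fun s : ℝ => -(1 - s/(n:ℝ))^(n-1)) (phin n s) s := by
        intro s _
        have hb : HasDerivAt (fun s : ℝ => 1 - s/(n:ℝ)) (-(1/n)) s := by
          simpa using (((hasDerivAt_id s).div_const (n:ℝ)).const_sub 1)
        have hp := (hb.fun_pow (n-1)).fun_neg
        refine hp.congr_deriv ?_
        unfold phin
        rw [show n - 1 - 1 = n - 2 from by omega]
        push_cast [Nat.cast_sub (by omega : 1 ≤ n)]
        ring
      rw [intervalIntegral.integral_eq_sub_of_hasDerivAt hderiv
        ((continuous_phin n).intervalIntegrable _ _)]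
      have : (1:ℝ) - 0/(n:ℝ) = 1 := by ring
      rw [this, one_pow]
      ring
    · have : min (n:ℝ) t ≤ 0 := le_trans (min_le_right _ _) (not_lt.1 ht)
      rw [Set.Ioc_eq_empty (by intro h; exact absurd (lt_of_lt_of_le h this) (lt_irrefl 0)),
        Measure.restrict_empty, integral_zero_measure]
  rw [← hreal]
  rw [← ofReal_integral_eq_lintegral_ofReal ((integrable_pdens n).integrableOn)
    (Filter.Eventually.of_forall (fun s => pdens_nonneg n s))]


lemma prod_withDensity (f g : ℝ → ℝ) (hf : Measurable f) (hg : Measurable g) :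
    (volume.withDensity fun x => ENNReal.ofReal (f x)).prod
        (volume.withDensity fun x => ENNReal.ofReal (g x))
      = (volume.prod volume).withDensity
          (fun p => ENNReal.ofReal (f p.1) * ENNReal.ofReal (g p.2)) := by
  refine Measure.prod_eq fun s t hs ht => ?_
  rw [withDensity_apply _ (hs.prod ht), ← Measure.prod_restrict,
    lintegral_prod_mul (f := fun x => ENNReal.ofReal (f x)) (g := fun x => ENNReal.ofReal (g x))
      (by fun_prop) (by fun_prop),
    withDensity_apply _ hs, withDensity_apply _ ht]

lemma integral_prod_withDensity (f : ℝ → ℝ) (hf : Measurable f) (hf0 : ∀ x, 0 ≤ f x)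
    (h : ℝ × ℝ → ℝ) :
    ∫ p, h p ∂((volume.withDensity fun x => ENNReal.ofReal (f x)).prod
        (volume.withDensity fun x => ENNReal.ofReal (f x)))
      = ∫ p, f p.1 * f p.2 * h p ∂(volume.prod volume) := by
  rw [prod_withDensity f f hf hf]
  have hd : (fun p : ℝ × ℝ => ENNReal.ofReal (f p.1) * ENNReal.ofReal (f p.2))
      = fun p => ((Real.toNNReal (f p.1 * f p.2) : NNReal) : ENNReal) := by
    funext p
    rw [← ENNReal.ofReal_mul (hf0 _)]
    rfl
  rw [hd, integral_withDensity_eq_integral_smul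
    (f := fun p : ℝ × ℝ => (f p.1 * f p.2).toNNReal)
    (((hf.comp measurable_fst).mul (hf.comp measurable_snd)).real_toNNReal) h]
  congr 1
  funext p
  rw [NNReal.smul_def, Real.coe_toNNReal _ (mul_nonneg (hf0 _) (hf0 _)), smul_eq_mul]

lemma integrable_prod_withDensity (f : ℝ → ℝ) (hf : Measurable f) (hf0 : ∀ x, 0 ≤ f x)
    (h : ℝ × ℝ → ℝ) :
    Integrable h ((volume.withDensity fun x => ENNReal.ofReal (f x)).prod
        (volume.withDensity fun x => ENNReal.ofReal (f x)))
      ↔ Integrable (fun p => f p.1 * f p.2 * h p) (volume.prod volume) := by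
  rw [prod_withDensity f f hf hf]
  rw [integrable_withDensity_iff (by fun_prop)
    (Filter.Eventually.of_forall fun p => ENNReal.mul_lt_top ENNReal.ofReal_lt_top
      ENNReal.ofReal_lt_top)]
  have key : ∀ p : ℝ × ℝ, h p * (ENNReal.ofReal (f p.1) * ENNReal.ofReal (f p.2)).toReal
      = f p.1 * f p.2 * h p := by
    intro p
    rw [ENNReal.toReal_mul, ENNReal.toReal_ofReal (hf0 _), ENNReal.toReal_ofReal (hf0 _)]
    ring
  constructor <;> intro hh <;> refine hh.congr (Filter.Eventually.of_forall fun p => ?_)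
  · exact key p
  · exact (key p).symm


variable {Ω : Type*} [MeasureSpace Ω] [IsProbabilityMeasure (ℙ : Measure Ω)]

lemma ae_pos_of_exp {f : Ω → ℝ} (hm : Measurable f)
    (hlaw : Measure.map f ℙ = expMeasure 1) : ∀ᵐ ω ∂(ℙ : Measure Ω), 0 < f ω := by
  rw [ae_iff]
  have h1 : {ω | ¬ 0 < f ω} = f ⁻¹' (Iic 0) := by
    ext ω; simp [not_lt]
  rw [h1, ← Measure.map_apply hm measurableSet_Iic, hlaw]
  have := lintegral_exponentialPDF_eq_antiDeriv (one_pos) 0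
  have h2 : expMeasure 1 (Iic 0) = ∫⁻ y in Iic (0:ℝ), exponentialPDF 1 y := by
    rw [show expMeasure 1 = volume.withDensity (exponentialPDF 1) from rfl,
      withDensity_apply _ measurableSet_Iic]
  rw [h2, this]
  norm_num

lemma laplace_single {f : Ω → ℝ} (hm : Measurable f)
    (hlaw : Measure.map f ℙ = expMeasure 1) {c : ℝ} (hc : 0 ≤ c) :
    ∫ ω, Real.exp (-(c * f ω)) ∂(ℙ : Measure Ω) = (1 + c)⁻¹ := by
  have h1 : ∫ ω, Real.exp (-(c * f ω)) ∂(ℙ : Measure Ω)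
      = ∫ x, Real.exp (-(c * x)) ∂(Measure.map f ℙ) := by
    rw [integral_map hm.aemeasurable (Measurable.aestronglyMeasurable (by fun_prop))]
  rw [h1, hlaw, laplace_expMeasure hc]

lemma laplace_finset_sum {ι : Type*} [DecidableEq ι] (f : ι → Ω → ℝ)
    (hm : ∀ i, Measurable (f i))
    (hindep : iIndepFun f ℙ)
    (hlaw : ∀ i, Measure.map (f i) ℙ = expMeasure 1)
    (s : Finset ι) {c : ℝ} (hc : 0 ≤ c) :
    ∫ ω, Real.exp (-(c * ∑ i ∈ s, f i ω)) ∂(ℙ : Measure Ω) = ((1+c)⁻¹)^(s.card) := by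
  induction s using Finset.induction_on with
  | empty => simp
  | insert a s' ha ih =>
    have hsum : ∀ ω, ∑ i ∈ insert a s', f i ω = f a ω + ∑ i ∈ s', f i ω := by
      intro ω; rw [Finset.sum_insert ha]
    have hexp : ∀ ω, Real.exp (-(c * ∑ i ∈ insert a s', f i ω))
        = Real.exp (-(c * f a ω)) * Real.exp (-(c * ∑ i ∈ s', f i ω)) := by
      intro ω; rw [hsum, ← Real.exp_add]; ring_nf
    simp_rw [hexp]
    have hind : IndepFun (f a) (fun ω => ∑ i ∈ s', f i ω) ℙ := by
      have := (hindep.indepFun_finsetSum_of_notMem hm ha).symm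
      have hfs : (∑ i ∈ s', f i) = fun ω => ∑ i ∈ s', f i ω := by
        funext ω; exact Finset.sum_apply ω s' f
      rwa [hfs] at this
    have hφ : Measurable (fun x : ℝ => Real.exp (-(c * x))) := by fun_prop
    have hind2 : IndepFun (fun ω => Real.exp (-(c * f a ω)))
        (fun ω => Real.exp (-(c * ∑ i ∈ s', f i ω))) ℙ := hind.comp hφ hφ
    have hmul := hind2.integral_fun_mul_eq_mul_integral
      (by exact ((hm a).const_mul c).neg.exp.aestronglyMeasurable)
      (by
        have : Measurable fun ω => ∑ i ∈ s', f i ω := by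
          exact Finset.measurable_sum s' (fun i _ => hm i)
        exact (this.const_mul c).neg.exp.aestronglyMeasurable)
    have hmul' : ∫ ω, Real.exp (-(c * f a ω)) * Real.exp (-(c * ∑ i ∈ s', f i ω)) ∂ℙ
        = (∫ ω, Real.exp (-(c * f a ω)) ∂ℙ) * ∫ ω, Real.exp (-(c * ∑ i ∈ s', f i ω)) ∂ℙ :=
      hmul
    rw [hmul', laplace_single (hm a) (hlaw a) hc, ih, Finset.card_insert_of_notMem ha,
      pow_succ]
    ring


lemma law_ratio {n : ℕ} (hn : 2 ≤ n) (ξ W : Ω → ℝ)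
    (hξ : Measurable ξ) (hW : Measurable W)
    (hind : IndepFun ξ W ℙ)
    (hlaw : Measure.map ξ ℙ = expMeasure 1)
    (hWpos : ∀ᵐ ω ∂(ℙ : Measure Ω), 0 < W ω)
    (hLap : ∀ c : ℝ, 0 ≤ c → ∫ ω, Real.exp (-(c * W ω)) ∂(ℙ : Measure Ω) = ((1+c)⁻¹)^(n-1)) :
    Measure.map (fun ω => ξ ω / ((ξ ω + W ω)/n)) ℙ
      = volume.withDensity (fun t => ENNReal.ofReal (pdens n t)) := by
  have hn0 : (0:ℝ) < n := by positivity
  haveI : IsProbabilityMeasure (expMeasure 1) := isProbabilityMeasure_expMeasure one_pos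
  set U : Ω → ℝ := fun ω => ξ ω / ((ξ ω + W ω)/n) with hUdef
  have hU : Measurable U := hξ.div ((hξ.add hW).div_const _)
  have hξpos := ae_pos_of_exp hξ hlaw
  haveI : IsProbabilityMeasure (Measure.map U ℙ) := Measure.isProbabilityMeasure_map hU.aemeasurable
  refine Measure.ext_of_Iic (Measure.map U ℙ) _ (fun t => ?_)
  rw [withDensity_apply _ measurableSet_Iic, lintegral_pdens_Iic hn t,
    Measure.map_apply hU measurableSet_Iic]
  rcases le_or_gt t 0 with ht | ht
  · rw [if_neg (not_lt.2 ht), ENNReal.ofReal_zero]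
    rw [measure_eq_zero_iff_ae_notMem]
    filter_upwards [hξpos, hWpos] with ω h1 h2
    intro hmem
    rw [mem_preimage, mem_Iic] at hmem
    have hD : 0 < (ξ ω + W ω)/(n:ℝ) := div_pos (by linarith) hn0
    have : 0 < U ω := div_pos h1 hD
    linarith
  · rw [if_pos ht]
    rcases le_or_gt (n:ℝ) t with htn | htn
    · -- t ≥ n : both sides are 1
      rw [min_eq_left htn, div_self hn0.ne', sub_self, zero_pow (by omega : n - 1 ≠ 0), sub_zero,
        ENNReal.ofReal_one, ← prob_compl_eq_zero_iff (hU measurableSet_Iic),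
        measure_eq_zero_iff_ae_notMem]
      filter_upwards [hξpos, hWpos] with ω h1 h2
      intro hmem
      simp only [mem_compl_iff, mem_preimage, mem_Iic, not_le] at hmem
      have hD : 0 < (ξ ω + W ω)/(n:ℝ) := div_pos (by linarith) hn0
      have hUlt : U ω < n := by
        show ξ ω / ((ξ ω + W ω)/(n:ℝ)) < n
        rw [div_lt_iff₀ hD]
        have : (n:ℝ) * ((ξ ω + W ω)/n) = ξ ω + W ω := by field_simp
        rw [this]
        linarith
      linarith
    · -- 0 < t < n
      have hnt : (0:ℝ) < (n:ℝ) - t := by linarith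
      set c : ℝ := t / ((n:ℝ) - t) with hcdef
      have hc : 0 ≤ c := div_nonneg ht.le hnt.le
      -- step 1 : the event is a.e. {ξ ≤ c W}
      have hstep1 : ℙ (U ⁻¹' Iic t) = ℙ {ω | ξ ω ≤ c * W ω} := by
        apply measure_congr
        rw [eventuallyEq_set]
        filter_upwards [hξpos, hWpos] with ω h1 h2
        have hD : 0 < (ξ ω + W ω)/(n:ℝ) := div_pos (by linarith) hn0
        show U ω ≤ t ↔ ξ ω ≤ c * W ω
        have hmemiff : U ω ≤ t ↔ ξ ω / ((ξ ω + W ω)/(n:ℝ)) ≤ t := Iff.rfl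
        rw [hmemiff, div_le_iff₀ hD, hcdef, div_mul_eq_mul_div, le_div_iff₀ hnt,
          ← mul_div_assoc, le_div_iff₀ hn0]
        constructor <;> intro h <;> nlinarith
      rw [hstep1]
      -- step 2 : push to the product measure
      set ν : Measure ℝ := Measure.map W ℙ with hνdef
      haveI : IsProbabilityMeasure ν := Measure.isProbabilityMeasure_map hW.aemeasurable
      have hmapPair : Measure.map (fun ω => (ξ ω, W ω)) ℙ = (expMeasure 1).prod ν := by
        rw [← hlaw, hνdef]
        exact (indepFun_iff_map_prod_eq_prod_map_map hξ.aemeasurable hW.aemeasurable).1 hind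
      have hset : MeasurableSet {p : ℝ × ℝ | p.1 ≤ c * p.2} :=
        measurableSet_le measurable_fst (measurable_const.mul measurable_snd)
      have hstep2 : ℙ {ω | ξ ω ≤ c * W ω} = ((expMeasure 1).prod ν) {p : ℝ × ℝ | p.1 ≤ c * p.2} := by
        rw [← hmapPair, Measure.map_apply (hξ.prodMk hW) hset]
        rfl
      rw [hstep2, Measure.prod_apply_symm hset]
      -- step 3 : sections are Iic
      have hsec : ∀ y : ℝ, (fun x => (x, y)) ⁻¹' {p : ℝ × ℝ | p.1 ≤ c * p.2} = Iic (c * y) := by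
        intro y; rfl
      simp_rw [hsec]
      have hν_pos : ∀ᵐ y ∂ν, 0 < y := by
        rw [hνdef]
        exact (ae_map_iff hW.aemeasurable measurableSet_Ioi).2 hWpos
      have hcongr : ∫⁻ y, expMeasure 1 (Iic (c * y)) ∂ν
          = ∫⁻ y, ENNReal.ofReal (1 - Real.exp (-(c * y))) ∂ν := by
        apply lintegral_congr_ae
        filter_upwards [hν_pos] with y hy
        rw [expMeasure_Iic, if_pos (mul_nonneg hc hy.le)]
      rw [hcongr]
      -- step 4 : convert to a Bochner integral
      have hexp_meas : Measurable fun y : ℝ => Real.exp (-(c * y)) := by fun_prop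
      have hexp_int : Integrable (fun y : ℝ => Real.exp (-(c * y))) ν := by
        apply Integrable.mono' (integrable_const (1:ℝ)) hexp_meas.aestronglyMeasurable
        filter_upwards [hν_pos] with y hy
        rw [Real.norm_eq_abs, abs_of_pos (Real.exp_pos _)]
        exact Real.exp_le_one_iff.2 (by nlinarith)
      have hint : Integrable (fun y : ℝ => 1 - Real.exp (-(c * y))) ν :=
        (integrable_const 1).sub hexp_int
      rw [← ofReal_integral_eq_lintegral_ofReal hint ?nonneg]
      case nonneg =>
        filter_upwards [hν_pos] with y hy
        have : Real.exp (-(c * y)) ≤ 1 := Real.exp_le_one_iff.2 (by nlinarith)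
        simp only [Pi.zero_apply]
        linarith
      -- step 5 : compute the integral
      have h5 : ∫ y, (1 - Real.exp (-(c * y))) ∂ν = 1 - ((1+c)⁻¹)^(n-1) := by
        rw [integral_sub (integrable_const 1) hexp_int, integral_const, probReal_univ,
          smul_eq_mul, mul_one]
        congr 1
        rw [hνdef, integral_map hW.aemeasurable hexp_meas.aestronglyMeasurable]
        exact hLap c hc
      rw [h5]
      have hcinv : (1 + c)⁻¹ = 1 - t/(n:ℝ) := by
        rw [hcdef]
        have h6 : 1 + t/((n:ℝ) - t) = (n:ℝ)/((n:ℝ)-t) := by field_simp; ring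
        rw [h6, inv_div, sub_div, div_self hn0.ne']
      rw [hcinv, min_eq_right htn.le]


end LeCamAux

open LeCamAux

/-- The sample mean of the first `n` variables of the sequence `X`. -/
noncomputable def sampleMean {Ω : Type*} (X : ℕ → Ω → ℝ) (n : ℕ) (ω : Ω) : ℝ :=
  (∑ i ∈ Finset.range n, X i ω) / n

set_option maxHeartbeats 1000000 in
/-- Formula (14): `E[g²(X₁Y₁/(X̄Ȳ))] → E[g²(X₁Y₁)] = ∫∫ g²(xy) e^(-x) e^(-y) dy dx`. -/
theorem lecam2d_formula14
    {Ω : Type*} [MeasureSpace Ω] [IsProbabilityMeasure (ℙ : Measure Ω)]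
    (X Y : ℕ → Ω → ℝ)
    (hmX : ∀ i, Measurable (X i)) (hmY : ∀ j, Measurable (Y j))
    (hindep : iIndepFun (Sum.elim X Y) ℙ)
    (hX : ∀ i, Measure.map (X i) ℙ = expMeasure 1)
    (hY : ∀ j, Measure.map (Y j) ℙ = expMeasure 1)
    (g : ℝ → ℝ) (hgm : Measurable g)
    (h2 : ContinuousOn g (Set.Ici 0))
    (h3 : Integrable (fun ω => (g (X 0 ω * Y 0 ω)) ^ 2) ℙ)
    :
    Tendsto (fun n : ℕ => ∫ ω, (g (X 0 ω * Y 0 ω / (sampleMean X n ω * sampleMean Y n ω))) ^ 2 ∂ℙ)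
        atTop (𝓝 (∫ ω, (g (X 0 ω * Y 0 ω)) ^ 2 ∂ℙ)) ∧
      (∫ ω, (g (X 0 ω * Y 0 ω)) ^ 2 ∂ℙ) =
        ∫ x in Set.Ioi (0 : ℝ), ∫ y in Set.Ioi (0 : ℝ),
          (g (x * y)) ^ 2 * Real.exp (-x) * Real.exp (-y) := by
  classical
  haveI : IsProbabilityMeasure (expMeasure 1) := isProbabilityMeasure_expMeasure one_pos
  set F : ℕ ⊕ ℕ → Ω → ℝ := Sum.elim X Y with hF
  have hmF : ∀ i, Measurable (F i) := by rintro (i | j); exacts [hmX i, hmY j]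
  have hlawF : ∀ i, Measure.map (F i) ℙ = expMeasure 1 := by rintro (i | j); exacts [hX i, hY j]
  have hpair01 : IndepFun (X 0) (Y 0) ℙ :=
    hindep.indepFun (show (Sum.inl 0 : ℕ ⊕ ℕ) ≠ Sum.inr 0 by simp)
  have hpairXY : Measure.map (fun ω => (X 0 ω, Y 0 ω)) ℙ
      = (expMeasure 1).prod (expMeasure 1) := by
    have h := (indepFun_iff_map_prod_eq_prod_map_map (hmX 0).aemeasurable
      (hmY 0).aemeasurable).1 hpair01
    rwa [hX 0, hY 0] at h
  set G : ℝ × ℝ → ℝ := fun p => (g (p.1 * p.2))^2 with hG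
  have hGmeas : Measurable G := (hgm.comp (measurable_fst.mul measurable_snd)).pow measurable_const
  have hInt1 : Integrable G ((expMeasure 1).prod (expMeasure 1)) := by
    rw [← hpairXY]
    exact (integrable_map_measure hGmeas.aestronglyMeasurable
      ((hmX 0).prodMk (hmY 0)).aemeasurable).2 h3
  have hE : ∫ ω, (g (X 0 ω * Y 0 ω))^2 ∂ℙ = ∫ p, G p ∂((expMeasure 1).prod (expMeasure 1)) := by
    rw [← hpairXY, integral_map ((hmX 0).prodMk (hmY 0)).aemeasurable
      hGmeas.aestronglyMeasurable]
  -- the key identity for n ≥ 2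
  have key : ∀ n : ℕ, 2 ≤ n →
      ∫ ω, (g (X 0 ω * Y 0 ω / (sampleMean X n ω * sampleMean Y n ω)))^2 ∂ℙ
        = ∫ p, pdens n p.1 * pdens n p.2 * G p ∂((volume : Measure ℝ).prod volume) := by
    intro n hn
    have hnpos : 0 < n := by omega
    have h0mem : 0 ∈ Finset.range n := Finset.mem_range.2 hnpos
    set e : Finset ℕ := (Finset.range n).erase 0 with he
    have h1mem : 1 ∈ e := Finset.mem_erase.2 ⟨one_ne_zero, Finset.mem_range.2 (by omega)⟩
    set Wx : Ω → ℝ := fun ω => ∑ i ∈ e, X i ω with hWx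
    set Wy : Ω → ℝ := fun ω => ∑ i ∈ e, Y i ω with hWy
    have hmWx : Measurable Wx := Finset.measurable_sum e (fun i _ => hmX i)
    have hmWy : Measurable Wy := Finset.measurable_sum e (fun i _ => hmY i)
    set UX : Ω → ℝ := fun ω => X 0 ω / ((X 0 ω + Wx ω)/(n:ℝ)) with hUX
    set VY : Ω → ℝ := fun ω => Y 0 ω / ((Y 0 ω + Wy ω)/(n:ℝ)) with hVY
    have hmUX : Measurable UX := (hmX 0).div (((hmX 0).add hmWx).div_const _)
    have hmVY : Measurable VY := (hmY 0).div (((hmY 0).add hmWy).div_const _)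
    -- law of UX
    have hlawUX : Measure.map UX ℙ
        = volume.withDensity (fun t => ENNReal.ofReal (pdens n t)) := by
      apply law_ratio hn (X 0) Wx (hmX 0) hmWx ?ind (hX 0) ?pos ?lap
      case ind =>
        have hnot : (Sum.inl 0 : ℕ ⊕ ℕ) ∉ e.map ⟨Sum.inl, Sum.inl_injective⟩ := by
          simp [he]
        have h := (hindep.indepFun_finsetSum_of_notMem hmF hnot).symm
        have hsum : (∑ j ∈ e.map ⟨Sum.inl, Sum.inl_injective⟩, F j) = Wx := by
          funext ω
          rw [Finset.sum_apply, Finset.sum_map]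
          rfl
        rwa [hsum] at h
      case pos =>
        have hall : ∀ᵐ ω ∂(ℙ : Measure Ω), ∀ i, 0 < X i ω :=
          ae_all_iff.2 (fun i => ae_pos_of_exp (hmX i) (hX i))
        filter_upwards [hall] with ω hω
        exact Finset.sum_pos (fun i _ => hω i) ⟨1, h1mem⟩
      case lap =>
        intro c hc
        have h := laplace_finset_sum F hmF hindep hlawF
          (e.map ⟨Sum.inl, Sum.inl_injective⟩) hc
        rw [Finset.card_map, Finset.card_erase_of_mem h0mem, Finset.card_range] at h
        have hsum2 : ∀ ω, ∑ j ∈ e.map ⟨Sum.inl, Sum.inl_injective⟩, F j ω = Wx ω := by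
          intro ω; rw [Finset.sum_map]; rfl
        simp_rw [hsum2] at h
        exact h
    have hlawVY : Measure.map VY ℙ
        = volume.withDensity (fun t => ENNReal.ofReal (pdens n t)) := by
      apply law_ratio hn (Y 0) Wy (hmY 0) hmWy ?ind (hY 0) ?pos ?lap
      case ind =>
        have hnot : (Sum.inr 0 : ℕ ⊕ ℕ) ∉ e.map ⟨Sum.inr, Sum.inr_injective⟩ := by
          simp [he]
        have h := (hindep.indepFun_finsetSum_of_notMem hmF hnot).symm
        have hsum : (∑ j ∈ e.map ⟨Sum.inr, Sum.inr_injective⟩, F j) = Wy := by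
          funext ω
          rw [Finset.sum_apply, Finset.sum_map]
          rfl
        rwa [hsum] at h
      case pos =>
        have hall : ∀ᵐ ω ∂(ℙ : Measure Ω), ∀ i, 0 < Y i ω :=
          ae_all_iff.2 (fun i => ae_pos_of_exp (hmY i) (hY i))
        filter_upwards [hall] with ω hω
        exact Finset.sum_pos (fun i _ => hω i) ⟨1, h1mem⟩
      case lap =>
        intro c hc
        have h := laplace_finset_sum F hmF hindep hlawF
          (e.map ⟨Sum.inr, Sum.inr_injective⟩) hc
        rw [Finset.card_map, Finset.card_erase_of_mem h0mem, Finset.card_range] at h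
        have hsum2 : ∀ ω, ∑ j ∈ e.map ⟨Sum.inr, Sum.inr_injective⟩, F j ω = Wy ω := by
          intro ω; rw [Finset.sum_map]; rfl
        simp_rw [hsum2] at h
        exact h
    -- independence of UX and VY
    have hindUV : IndepFun UX VY ℙ := by
      set S : Finset (ℕ ⊕ ℕ) := (Finset.range n).map ⟨Sum.inl, Sum.inl_injective⟩ with hS
      set T : Finset (ℕ ⊕ ℕ) := (Finset.range n).map ⟨Sum.inr, Sum.inr_injective⟩ with hT
      have hST : Disjoint S T := by
        refine Finset.disjoint_left.2 ?_
        intro x hxS hxT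
        rcases Finset.mem_map.1 hxS with ⟨a, _, rfl⟩
        rcases Finset.mem_map.1 hxT with ⟨b, _, hb⟩
        simpa using hb
      have h0S : (Sum.inl 0 : ℕ ⊕ ℕ) ∈ S := Finset.mem_map_of_mem _ h0mem
      have h0T : (Sum.inr 0 : ℕ ⊕ ℕ) ∈ T := Finset.mem_map_of_mem _ h0mem
      have hiS : ∀ j ∈ e, (Sum.inl j : ℕ ⊕ ℕ) ∈ S :=
        fun j hj => Finset.mem_map_of_mem _ (Finset.mem_of_mem_erase hj)
      have hiT : ∀ j ∈ e, (Sum.inr j : ℕ ⊕ ℕ) ∈ T :=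
        fun j hj => Finset.mem_map_of_mem _ (Finset.mem_of_mem_erase hj)
      set φS : (↥S → ℝ) → ℝ := fun v => v ⟨Sum.inl 0, h0S⟩ /
        ((v ⟨Sum.inl 0, h0S⟩ + ∑ j ∈ e.attach, v ⟨Sum.inl j.1, hiS j.1 j.2⟩)/(n:ℝ)) with hφS
      set φT : (↥T → ℝ) → ℝ := fun v => v ⟨Sum.inr 0, h0T⟩ /
        ((v ⟨Sum.inr 0, h0T⟩ + ∑ j ∈ e.attach, v ⟨Sum.inr j.1, hiT j.1 j.2⟩)/(n:ℝ)) with hφT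
      have hmφS : Measurable φS := by
        apply Measurable.div
        · exact measurable_pi_apply _
        · apply Measurable.div_const
          apply Measurable.add
          · exact measurable_pi_apply _
          · exact Finset.measurable_sum _ (fun j _ => measurable_pi_apply _)
      have hmφT : Measurable φT := by
        apply Measurable.div
        · exact measurable_pi_apply _
        · apply Measurable.div_const
          apply Measurable.add
          · exact measurable_pi_apply _
          · exact Finset.measurable_sum _ (fun j _ => measurable_pi_apply _)
      have h := (hindep.indepFun_finset S T hST hmF).comp hmφS hmφT
      have hcompS : φS ∘ (fun a (i : ↥S) => F i a) = UX := by
        funext a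
        show (fun v : ↥S → ℝ => v ⟨Sum.inl 0, h0S⟩ /
          ((v ⟨Sum.inl 0, h0S⟩ + ∑ j ∈ e.attach, v ⟨Sum.inl j.1, hiS j.1 j.2⟩)/(n:ℝ)))
            (fun i : ↥S => F i a) = UX a
        simp only
        rw [show (∑ j ∈ e.attach, F (Sum.inl j.1) a) = ∑ i ∈ e, X i a from
          Finset.sum_attach e (fun i => X i a)]
        rfl
      have hcompT : φT ∘ (fun a (i : ↥T) => F i a) = VY := by
        funext a
        show (fun v : ↥T → ℝ => v ⟨Sum.inr 0, h0T⟩ /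
          ((v ⟨Sum.inr 0, h0T⟩ + ∑ j ∈ e.attach, v ⟨Sum.inr j.1, hiT j.1 j.2⟩)/(n:ℝ)))
            (fun i : ↥T => F i a) = VY a
        simp only
        rw [show (∑ j ∈ e.attach, F (Sum.inr j.1) a) = ∑ i ∈ e, Y i a from
          Finset.sum_attach e (fun i => Y i a)]
        rfl
      rwa [hcompS, hcompT] at h
    have hmapUV : Measure.map (fun ω => (UX ω, VY ω)) ℙ
        = (volume.withDensity fun t => ENNReal.ofReal (pdens n t)).prod
          (volume.withDensity fun t => ENNReal.ofReal (pdens n t)) := by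
      have h := (indepFun_iff_map_prod_eq_prod_map_map hmUX.aemeasurable
        hmVY.aemeasurable).1 hindUV
      rwa [hlawUX, hlawVY] at h
    have hptwise : ∀ ω, (g (X 0 ω * Y 0 ω / (sampleMean X n ω * sampleMean Y n ω)))^2
        = G (UX ω, VY ω) := by
      intro ω
      have hsX : sampleMean X n ω = (X 0 ω + Wx ω)/(n:ℝ) := by
        show (∑ i ∈ Finset.range n, X i ω)/(n:ℝ) = _
        rw [← Finset.add_sum_erase _ _ h0mem]
      have hsY : sampleMean Y n ω = (Y 0 ω + Wy ω)/(n:ℝ) := by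
        show (∑ i ∈ Finset.range n, Y i ω)/(n:ℝ) = _
        rw [← Finset.add_sum_erase _ _ h0mem]
      have harg : X 0 ω * Y 0 ω / (sampleMean X n ω * sampleMean Y n ω) = UX ω * VY ω := by
        rw [hsX, hsY, hUX, hVY]
        exact (div_mul_div_comm _ _ _ _).symm
      rw [hG]
      simp only
      rw [harg]
    calc ∫ ω, (g (X 0 ω * Y 0 ω / (sampleMean X n ω * sampleMean Y n ω)))^2 ∂ℙ
        = ∫ ω, G (UX ω, VY ω) ∂ℙ := by
          exact integral_congr_ae (Filter.Eventually.of_forall hptwise)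
      _ = ∫ p, G p ∂(Measure.map (fun ω => (UX ω, VY ω)) ℙ) :=
          (integral_map (hmUX.prodMk hmVY).aemeasurable hGmeas.aestronglyMeasurable).symm
      _ = ∫ p, pdens n p.1 * pdens n p.2 * G p ∂((volume : Measure ℝ).prod volume) := by
          rw [hmapUV]
          exact integral_prod_withDensity (pdens n) (measurable_pdens n) (pdens_nonneg n) G
  -- integrability of the dominating function
  have hInt2 : Integrable (fun p : ℝ × ℝ => qr p.1 * qr p.2 * G p)
      ((volume : Measure ℝ).prod volume) := by
    rw [← integrable_prod_withDensity qr measurable_qr qr_nonneg G, ← expMeasure_eq]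
    exact hInt1
  constructor
  · -- the convergence statement
    have hdct : Tendsto (fun n : ℕ => ∫ p, pdens n p.1 * pdens n p.2 * G p
        ∂((volume : Measure ℝ).prod volume)) atTop
        (𝓝 (∫ p, qr p.1 * qr p.2 * G p ∂((volume : Measure ℝ).prod volume))) := by
      apply tendsto_integral_filter_of_dominated_convergence
        (fun p : ℝ × ℝ => Real.exp 4 * (qr p.1 * qr p.2 * G p))
      · refine Filter.Eventually.of_forall (fun n => ?_)
        exact ((((measurable_pdens n).comp measurable_fst).mul
          ((measurable_pdens n).comp measurable_snd)).mul hGmeas).aestronglyMeasurable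
      · filter_upwards [eventually_ge_atTop 2] with n hn
        refine Filter.Eventually.of_forall (fun p => ?_)
        have hGp : 0 ≤ G p := by rw [hG]; positivity
        have h1 : 0 ≤ pdens n p.1 * pdens n p.2 * G p :=
          mul_nonneg (mul_nonneg (pdens_nonneg _ _) (pdens_nonneg _ _)) hGp
        rw [Real.norm_eq_abs, abs_of_nonneg h1]
        have hb1 := pdens_le hn p.1
        have hb2 := pdens_le hn p.2
        have h4 : Real.exp 4 = Real.exp 2 * Real.exp 2 := by
          rw [← Real.exp_add]; norm_num
        calc pdens n p.1 * pdens n p.2 * G p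
            ≤ (Real.exp 2 * qr p.1) * (Real.exp 2 * qr p.2) * G p := by
              apply mul_le_mul_of_nonneg_right _ hGp
              exact mul_le_mul hb1 hb2 (pdens_nonneg _ _)
                (mul_nonneg (Real.exp_pos 2).le (qr_nonneg _))
          _ = Real.exp 4 * (qr p.1 * qr p.2 * G p) := by rw [h4]; ring
      · exact hInt2.const_mul _
      · refine Filter.Eventually.of_forall (fun p => ?_)
        exact ((pdens_tendsto p.1).mul (pdens_tendsto p.2)).mul tendsto_const_nhds
    have hEeq : ∫ p, qr p.1 * qr p.2 * G p ∂((volume : Measure ℝ).prod volume)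
        = ∫ ω, (g (X 0 ω * Y 0 ω))^2 ∂ℙ := by
      rw [hE, ← integral_prod_withDensity qr measurable_qr qr_nonneg G, ← expMeasure_eq]
    rw [← hEeq]
    apply Tendsto.congr' _ hdct
    filter_upwards [eventually_ge_atTop 2] with n hn
    exact (key n hn).symm
  · -- the identity
    rw [hE, integral_prod _ hInt1, integral_expMeasure (fun x => ∫ y, G (x, y) ∂(expMeasure 1))]
    refine setIntegral_congr_fun measurableSet_Ioi (fun x _ => ?_)
    rw [integral_expMeasure (fun y => G (x, y)), ← integral_mul_const]
    refine setIntegral_congr_fun measurableSet_Ioi (fun y _ => ?_)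
    rw [hG]
    simp only
    ring
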